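/- For each countable set E ⊆ 𝕋 (the unit circle ℝ/2πℤ), quasi all f ∈ C(𝕋) (i.e., the set of such f is residual in C(𝕋) with the sup norm) have the property that for every function h : E → ℂ there is a subsequence of the partial sums (sₙf) of the Fourier series of f converging pointwise to h on E. -/

import Mathlib

open MeasureTheory Complex Filter Topology Set TopologicalSpace

noncomputable section

instance : Fact (0 < 2 * Real.pi) := ⟨by positivity⟩

/-- The unit circle ℝ/2πℤ. -/
abbrev UnitCircle := AddCircle (2 * Real.pi)

/-- The n-th partial sum of the Fourier series of `f`. -/
noncomputable def partialSum (n : ℕ) (f : UnitCircle → ℂ) : C(UnitCircle, ℂ) :=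
  ∑ k ∈ Finset.Icc (-(n : ℤ)) (n : ℤ), fourierCoeff f k • fourier k

namespace KK
open AddCircle

lemma integrable_smul (j : ℤ) (f : C(UnitCircle, ℂ)) :
    Integrable (fun t => fourier j t • f t) haarAddCircle := by
  apply Continuous.integrable_of_hasCompactSupport
  · exact ((map_continuous (fourier j)).smul (map_continuous f))
  · exact IsCompact.of_isClosed_subset isCompact_univ (isClosed_tsupport _) (subset_univ _)

/-- Fourier coefficient as a linear map on C(UnitCircle, ℂ). -/
def coeffL (j : ℤ) : C(UnitCircle, ℂ) →ₗ[ℂ] ℂ where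
  toFun f := fourierCoeff (⇑f) j
  map_add' f g := by
    show (∫ t : UnitCircle, fourier (-j) t • (f + g) t ∂haarAddCircle) = _
    simp only [ContinuousMap.add_apply, smul_add]
    exact integral_add (integrable_smul (-j) f) (integrable_smul (-j) g)
  map_smul' c f := by
    have := fourierCoeff.const_smul (⇑f) c j
    simp only [RingHom.id_apply]
    rw [← this]; rfl

lemma coeffL_apply (j : ℤ) (f : C(UnitCircle, ℂ)) : coeffL j f = fourierCoeff (⇑f) j := rfl

lemma coeffL_norm (j : ℤ) (f : C(UnitCircle, ℂ)) : ‖coeffL j f‖ ≤ ‖f‖ := by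
  rw [coeffL_apply, fourierCoeff]
  refine le_trans (norm_integral_le_of_norm_le_const (C := ‖f‖) ?_) (by simp)
  filter_upwards with t
  rw [norm_smul]
  simpa [Circle.norm_coe] using f.norm_coe_le_norm t

lemma coeffL_continuous (j : ℤ) : Continuous fun f : C(UnitCircle, ℂ) => coeffL j f := by
  have : LipschitzWith 1 fun f : C(UnitCircle, ℂ) => coeffL j f := by
    apply LipschitzWith.of_dist_le_mul
    intro f g
    rw [NNReal.coe_one, one_mul, dist_eq_norm, dist_eq_norm, ← map_sub]
    exact coeffL_norm j (f - g)
  exact this.continuous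

lemma coeffL_fourier (m j : ℤ) : coeffL j (fourier m) = if m = j then 1 else 0 := by
  rw [coeffL_apply, fourierCoeff]
  have : ∀ t : UnitCircle, (fourier (-j) t : ℂ) • (fourier m t : ℂ) = fourier (-j + m) t := by
    intro t; rw [fourier_add]; simp [smul_eq_mul]
  simp_rw [this]
  by_cases h : m = j
  · subst h
    simp_rw [neg_add_cancel]
    simp [fourier_zero]
  · have hij : -j + m ≠ 0 := by omega
    have := integral_eq_zero_of_add_right_eq_neg (μ := haarAddCircle)
      (fourier_add_half_inv_index hij (Fact.out : 0 < 2 * Real.pi))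
    rw [this, if_neg h]

lemma partialSum_eq (n : ℕ) (f : C(UnitCircle, ℂ)) :
    partialSum n ⇑f = ∑ k ∈ Finset.Icc (-(n : ℤ)) (n : ℤ), coeffL k f • fourier k := rfl

lemma partialSum_apply (n : ℕ) (f : C(UnitCircle, ℂ)) (t : UnitCircle) :
    partialSum n ⇑f t = ∑ k ∈ Finset.Icc (-(n : ℤ)) (n : ℤ), coeffL k f * fourier k t := by
  rw [partialSum_eq]
  rw [ContinuousMap.coe_sum, Finset.sum_apply]
  simp [smul_eq_mul]

lemma partialSum_eval_continuous (n : ℕ) (t : UnitCircle) :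
    Continuous fun f : C(UnitCircle, ℂ) => partialSum n ⇑f t := by
  simp_rw [partialSum_apply]
  exact continuous_finset_sum _ fun k _ => (coeffL_continuous k).mul continuous_const

lemma partialSum_add (n : ℕ) (f g : C(UnitCircle, ℂ)) :
    partialSum n ⇑(f + g) = partialSum n ⇑f + partialSum n ⇑g := by
  simp_rw [partialSum_eq, map_add, add_smul, Finset.sum_add_distrib]

lemma partialSum_sum {ι : Type*} (s : Finset ι) (F : ι → C(UnitCircle, ℂ)) (n : ℕ) :
    partialSum n ⇑(∑ i ∈ s, F i) = ∑ i ∈ s, partialSum n ⇑(F i) := by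
  simp_rw [partialSum_eq, map_sum, Finset.sum_smul]
  exact Finset.sum_comm

lemma partialSum_smul (n : ℕ) (c : ℂ) (f : C(UnitCircle, ℂ)) :
    partialSum n ⇑(c • f) = c • partialSum n ⇑f := by
  simp_rw [partialSum_eq, _root_.map_smul, Finset.smul_sum, smul_assoc]

lemma partialSum_sub (n : ℕ) (f g : C(UnitCircle, ℂ)) :
    partialSum n ⇑(f - g) = partialSum n ⇑f - partialSum n ⇑g := by
  simp_rw [partialSum_eq, map_sub, sub_smul, Finset.sum_sub_distrib]

lemma partialSum_smul_fourier (n : ℕ) (a : ℂ) (j : ℤ) :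
    partialSum n ⇑(a • fourier j) =
      if j ∈ Finset.Icc (-(n : ℤ)) (n : ℤ) then a • fourier j else 0 := by
  rw [partialSum_eq]
  have : ∀ k, coeffL k (a • fourier j) = if j = k then a else 0 := by
    intro k; rw [_root_.map_smul, coeffL_fourier]
    by_cases h : j = k <;> simp [h]
  simp_rw [this, ite_smul, zero_smul]
  rw [Finset.sum_ite_eq]

/-! ### Analysis lemmas -/

lemma abel_bound (z : ℕ → ℂ) (c : ℕ → ℝ) (a b : ℕ) (S : ℝ)
    (hc : ∀ k, a ≤ k → 0 ≤ c k) (hmono : ∀ k, a ≤ k → c (k + 1) ≤ c k)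
    (hS : ∀ j, ‖∑ k ∈ Finset.Ico a j, z k‖ ≤ S) :
    ‖∑ k ∈ Finset.Ico a b, c k • z k‖ ≤ S * c a := by
  have hS0 : 0 ≤ S := le_trans (norm_nonneg _) (hS a)
  rcases le_or_gt a b with hab | hab
  · set T : ℕ → ℂ := fun j => ∑ k ∈ Finset.Ico a j, z k with hT
    have key : ∀ m, a ≤ m → ∑ k ∈ Finset.Ico a m, c k • z k =
        (∑ k ∈ Finset.Ico a m, (c k - c (k + 1)) • T (k + 1)) + c m • T m := by
      intro m hm
      induction m, hm using Nat.le_induction with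
      | base => simp [hT]
      | succ m hm ih =>
        rw [Finset.sum_Ico_succ_top hm, ih, Finset.sum_Ico_succ_top hm]
        have hTz : T (m + 1) = T m + z m := by
          rw [hT]; simp [Finset.sum_Ico_succ_top hm]
        rw [hTz]
        simp only [smul_add, sub_smul]
        ring_nf
    rw [key b hab]
    have h1 : ‖∑ k ∈ Finset.Ico a b, (c k - c (k + 1)) • T (k + 1)‖ ≤
        ∑ k ∈ Finset.Ico a b, (c k - c (k + 1)) * S := by
      refine le_trans (norm_sum_le _ _) (Finset.sum_le_sum fun k hk => ?_)
      rw [norm_smul, Real.norm_eq_abs]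
      have hk' : a ≤ k := (Finset.mem_Ico.mp hk).1
      rw [_root_.abs_of_nonneg (by linarith [hmono k hk'] : (0:ℝ) ≤ c k - c (k+1))]
      exact mul_le_mul_of_nonneg_left (hS _) (by linarith [hmono k hk'])
    have h3 : ∀ m, a ≤ m → (∑ k ∈ Finset.Ico a m, (c k - c (k + 1))) = c a - c m := by
      intro m hm
      induction m, hm using Nat.le_induction with
      | base => simp
      | succ m hm ih => rw [Finset.sum_Ico_succ_top hm, ih]; ring
    have h2 : ∑ k ∈ Finset.Ico a b, (c k - c (k + 1)) * S = (c a - c b) * S := by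
      rw [← Finset.sum_mul, h3 b hab]
    have hcb : 0 ≤ c b := hc b hab
    calc ‖_ + c b • T b‖ ≤ ‖∑ k ∈ Finset.Ico a b, (c k - c (k + 1)) • T (k + 1)‖
          + ‖c b • T b‖ := norm_add_le _ _
      _ ≤ (c a - c b) * S + c b * S := by
          refine add_le_add (h1.trans_eq h2) ?_
          rw [norm_smul, Real.norm_eq_abs, _root_.abs_of_nonneg hcb]
          exact mul_le_mul_of_nonneg_left (hS b) hcb
      _ = S * c a := by ring
  · rw [Finset.Ico_eq_empty (by omega)]
    simp only [Finset.sum_empty, norm_zero]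
    exact mul_nonneg hS0 (hc a le_rfl)

lemma geom_Ico_bound (z : ℂ) (hz : ‖z‖ = 1) (h1 : z ≠ 1) (a j : ℕ) :
    ‖∑ k ∈ Finset.Ico a j, z ^ k‖ ≤ 2 / ‖z - 1‖ := by
  have hd : 0 < ‖z - 1‖ := by
    rw [norm_pos_iff]; exact sub_ne_zero.mpr h1
  rcases le_or_gt a j with h | h
  · rw [geom_sum_Ico h1 h, div_eq_mul_inv, norm_mul]
    rw [norm_inv]
    rw [div_eq_mul_inv]
    refine mul_le_mul_of_nonneg_right ?_ (by positivity)
    calc ‖z ^ j - z ^ a‖ ≤ ‖z ^ j‖ + ‖z ^ a‖ := norm_sub_le _ _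
      _ = 2 := by simp [norm_pow, hz]; norm_num
  · rw [Finset.Ico_eq_empty (by omega)]
    simp only [Finset.sum_empty, norm_zero]
    positivity

/-- `Fz n z = ∑_{k=1}^n z^k / k`. -/
def Fz (n : ℕ) (z : ℂ) : ℂ := ∑ k ∈ Finset.Ico 1 (n + 1), (k : ℂ)⁻¹ * z ^ k

lemma Fz_tail_bound (z : ℂ) (hz : ‖z‖ = 1) (h1 : z ≠ 1) (a b : ℕ) (ha : 1 ≤ a) :
    ‖∑ k ∈ Finset.Ico a b, (k : ℂ)⁻¹ * z ^ k‖ ≤ (2 / ‖z - 1‖) * (a : ℝ)⁻¹ := by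
  have : ∀ k : ℕ, (k : ℂ)⁻¹ * z ^ k = ((k : ℝ)⁻¹ : ℝ) • z ^ k := by
    intro k; rw [real_smul]; push_cast; ring
  simp_rw [this]
  refine abel_bound (fun k => z ^ k) (fun k => (k : ℝ)⁻¹) a b (2 / ‖z - 1‖)
    (fun k _ => by positivity) (fun k hk => ?_) (fun j => geom_Ico_bound z hz h1 a j)
  have h0 : (0:ℝ) < k := by exact_mod_cast lt_of_lt_of_le one_pos (ha.trans hk)
  apply inv_anti₀ h0
  push_cast; linarith

lemma Fz_bound (n : ℕ) (z : ℂ) (hz : ‖z‖ = 1) (h1 : z ≠ 1) :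
    ‖Fz n z‖ ≤ 2 / ‖z - 1‖ := by
  have := Fz_tail_bound z hz h1 1 (n + 1) le_rfl
  simpa [Fz] using this

lemma pow_sub_one_bound (z : ℂ) (hz : ‖z‖ = 1) (k : ℕ) :
    ‖z ^ k - 1‖ ≤ k * ‖z - 1‖ := by
  induction k with
  | zero => simp
  | succ k ih =>
    have : z ^ (k + 1) - 1 = z ^ k * (z - 1) + (z ^ k - 1) := by ring
    rw [this]
    calc ‖z ^ k * (z - 1) + (z ^ k - 1)‖ ≤ ‖z ^ k * (z - 1)‖ + ‖z ^ k - 1‖ := norm_add_le _ _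
      _ ≤ 1 * ‖z - 1‖ + k * ‖z - 1‖ := by
          refine add_le_add ?_ ih
          rw [norm_mul, norm_pow, hz, one_pow]
      _ = (k + 1 : ℕ) * ‖z - 1‖ := by push_cast; ring

lemma im_Fz_bound (n : ℕ) (z : ℂ) (hz : ‖z‖ = 1) : |(Fz n z).im| ≤ 5 := by
  by_cases h1 : z = 1
  · subst h1
    have : (Fz n 1).im = 0 := by
      rw [Fz, Complex.im_sum]
      refine Finset.sum_eq_zero fun k _ => ?_
      simp
    rw [this]; norm_num
  have hd : 0 < ‖z - 1‖ := by rw [norm_pos_iff]; exact sub_ne_zero.mpr h1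
  set d := ‖z - 1‖ with hdd
  have hd2 : d ≤ 2 := by
    calc ‖z - 1‖ ≤ ‖z‖ + ‖(1:ℂ)‖ := norm_sub_le _ _
      _ = 2 := by rw [hz]; norm_num
  set K : ℕ := ⌈2 / d⌉₊ with hK
  have hK1 : (1:ℝ) ≤ 2 / d := (one_le_div hd).mpr hd2
  have hKge : (2 / d) ≤ K := Nat.le_ceil _
  have hKle : (K : ℝ) ≤ 2 / d + 1 := le_of_lt (Nat.ceil_lt_add_one (by positivity))
  set m : ℕ := min (n + 1) (K + 1) with hm
  have hm1 : 1 ≤ m := by simp [hm]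
  have hmn : m ≤ n + 1 := min_le_left _ _
  have hsplit : Fz n z = (∑ k ∈ Finset.Ico 1 m, (k : ℂ)⁻¹ * z ^ k) +
      (∑ k ∈ Finset.Ico m (n + 1), (k : ℂ)⁻¹ * z ^ k) := by
    rw [Fz, Finset.sum_Ico_consecutive _ hm1 hmn]
  have head : |(∑ k ∈ Finset.Ico 1 m, (k : ℂ)⁻¹ * z ^ k).im| ≤ 4 := by
    rw [Complex.im_sum]
    calc |∑ k ∈ Finset.Ico 1 m, ((k : ℂ)⁻¹ * z ^ k).im|
        ≤ ∑ k ∈ Finset.Ico 1 m, |((k : ℂ)⁻¹ * z ^ k).im| := Finset.abs_sum_le_sum_abs _ _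
      _ ≤ ∑ k ∈ Finset.Ico 1 m, d := by
          refine Finset.sum_le_sum fun k hk => ?_
          obtain ⟨hk1, hk2⟩ := Finset.mem_Ico.mp hk
          have hkpos : (0:ℝ) < k := by exact_mod_cast lt_of_lt_of_le one_pos hk1
          have : ((k : ℂ)⁻¹ * z ^ k).im = (k : ℝ)⁻¹ * (z ^ k).im := by
            rw [show ((k:ℂ))⁻¹ = (((k:ℝ))⁻¹ : ℝ) • (1:ℂ) by push_cast; simp]
            simp
          rw [this, abs_mul, _root_.abs_of_nonneg (by positivity : (0:ℝ) ≤ (k:ℝ)⁻¹)]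
          have him : |(z ^ k).im| ≤ (k : ℝ) * d := by
            have : (z ^ k).im = (z ^ k - 1).im := by simp
            rw [this]
            exact le_trans (Complex.abs_im_le_norm _) (pow_sub_one_bound z hz k)
          calc (k:ℝ)⁻¹ * |(z ^ k).im| ≤ (k:ℝ)⁻¹ * ((k:ℝ) * d) := by
                exact mul_le_mul_of_nonneg_left him (by positivity)
            _ = d := by field_simp
      _ = (m - 1 : ℕ) * d := by
          rw [Finset.sum_const, Nat.card_Ico, nsmul_eq_mul]
      _ ≤ 4 := by
          have hcard : ((m - 1 : ℕ) : ℝ) ≤ (K : ℝ) := by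
            have : m - 1 ≤ K := by omega
            exact_mod_cast this
          have : ((m - 1 : ℕ) : ℝ) * d ≤ K * d :=
            mul_le_mul_of_nonneg_right hcard hd.le
          refine le_trans this ?_
          calc (K:ℝ) * d ≤ (2 / d + 1) * d := mul_le_mul_of_nonneg_right hKle hd.le
            _ = 2 + d := by field_simp
            _ ≤ 4 := by linarith
  have tail : |(∑ k ∈ Finset.Ico m (n + 1), (k : ℂ)⁻¹ * z ^ k).im| ≤ 1 := by
    rcases le_or_gt (n + 1) (K + 1) with hc | hc
    · have hmeq : m = n + 1 := Nat.min_eq_left hc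
      rw [hmeq, Finset.Ico_eq_empty (by omega)]
      simp
    · have hmK : m = K + 1 := Nat.min_eq_right (by omega)
      refine le_trans (Complex.abs_im_le_norm _) ?_
      refine le_trans (Fz_tail_bound z hz h1 m (n + 1) hm1) ?_
      rw [hmK]
      have : ((K + 1 : ℕ) : ℝ)⁻¹ ≤ d / 2 := by
        rw [inv_le_comm₀ (by positivity) (by positivity)]
        push_cast
        calc (d / 2)⁻¹ = 2 / d := by field_simp
          _ ≤ K := hKge
          _ ≤ K + 1 := by linarith
      calc 2 / d * ((K + 1 : ℕ) : ℝ)⁻¹ ≤ 2 / d * (d / 2) :=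
            mul_le_mul_of_nonneg_left this (by positivity)
        _ = 1 := by field_simp
  rw [hsplit, Complex.add_im]
  exact le_trans (abs_add_le _ _) (by linarith)

def Hr (n : ℕ) : ℝ := ∑ k ∈ Finset.Ico 1 (n + 1), (k : ℝ)⁻¹

lemma Hr_tendsto : Tendsto Hr atTop atTop := by
  have : Hr = fun n => ∑ i ∈ Finset.range n, 1 / ((i : ℝ) + 1) := by
    funext n
    rw [Hr, Finset.sum_Ico_eq_sum_range]
    simp only [one_div]
    exact Finset.sum_congr rfl fun x _ => by push_cast; rw [add_comm]
  rw [this]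
  exact Real.tendsto_sum_range_one_div_nat_succ_atTop

lemma Hr_pos (n : ℕ) (hn : 1 ≤ n) : 0 < Hr n := by
  rw [Hr]
  apply Finset.sum_pos
  · intro k hk
    obtain ⟨h1, _⟩ := Finset.mem_Ico.mp hk
    have : (0:ℝ) < k := by exact_mod_cast h1
    positivity
  · exact ⟨1, Finset.mem_Ico.mpr ⟨le_rfl, by omega⟩⟩

lemma Fz_one (n : ℕ) : Fz n 1 = (Hr n : ℂ) := by
  rw [Fz, Hr]
  push_cast
  simp

lemma Fz_conj (n : ℕ) (z : ℂ) : Fz n (starRingEnd ℂ z) = starRingEnd ℂ (Fz n z) := by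
  rw [Fz, Fz, map_sum]
  refine Finset.sum_congr rfl fun k _ => ?_
  rw [map_mul, map_pow, map_inv₀, Complex.conj_natCast]

lemma sub_conj_norm (w : ℂ) : ‖w - starRingEnd ℂ w‖ = 2 * |w.im| := by
  rw [Complex.sub_conj]
  rw [norm_mul, Complex.norm_real, Complex.norm_I, mul_one, Real.norm_eq_abs, abs_mul]
  norm_num

/-! ### fourier point lemmas -/

lemma fourier_pt_add (j : ℤ) (x y : UnitCircle) :
    (fourier j (x + y) : ℂ) = fourier j x * fourier j y := by
  simp only [fourier_apply, smul_add]
  rw [toCircle_add]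
  norm_cast

lemma fourier_pt_zero (j : ℤ) : (fourier j (0 : UnitCircle) : ℂ) = 1 := by
  simp only [fourier_apply, smul_zero]
  simp

lemma fourier_norm_one (j : ℤ) (x : UnitCircle) : ‖(fourier j x : ℂ)‖ = 1 :=
  Circle.norm_coe _

lemma fourier_pt_neg (j : ℤ) (x : UnitCircle) :
    (fourier j (-x) : ℂ) = fourier (-j) x := by
  simp only [fourier_apply]
  rw [smul_neg, neg_smul]

lemma fourier_index_pow (j : ℤ) (x : UnitCircle) (k : ℕ) :
    (fourier (k * j) x : ℂ) = (fourier j x : ℂ) ^ k := by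
  induction k with
  | zero => simp [fourier_zero]
  | succ k ih =>
    have : ((k : ℤ) + 1) * j = k * j + j := by ring
    rw [show (((k+1 : ℕ) : ℤ) * j) = (k : ℤ) * j + j by push_cast; ring]
    rw [fourier_add]
    rw [ih]; ring

lemma fourier_eq_one_iff (x : UnitCircle) (h : (fourier 1 x : ℂ) = 1) : x = 0 := by
  induction x using QuotientAddGroup.induction_on with
  | H t =>
    rw [fourier_coe_apply] at h
    have h' : Complex.exp (Complex.I * t) = 1 := by
      rw [← h]
      congr 1
      have hpi : (Real.pi : ℂ) ≠ 0 := Complex.ofReal_ne_zero.mpr Real.pi_ne_zero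
      push_cast
      field_simp
    rw [Complex.exp_eq_one_iff] at h'
    obtain ⟨n, hn⟩ := h'
    have ht : (t : ℂ) = n * (2 * Real.pi) := by
      refine mul_left_cancel₀ Complex.I_ne_zero ?_
      rw [hn]; ring
    have htr : t = (n : ℝ) * (2 * Real.pi) := by exact_mod_cast ht
    rw [htr]
    rw [AddCircle.coe_eq_zero_iff]
    exact ⟨n, by rw [zsmul_eq_mul]⟩

/-! ### The perturbation construction -/

def Ablock (n M : ℕ) (p : UnitCircle) : C(UnitCircle, ℂ) :=
  ∑ k ∈ Finset.Ico 1 (n + 1),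
    ((k : ℂ)⁻¹ * (fourier (-((M : ℤ) - k)) p : ℂ)) • fourier ((M : ℤ) - k)

def Bblock (n M : ℕ) (p : UnitCircle) : C(UnitCircle, ℂ) :=
  ∑ k ∈ Finset.Ico 1 (n + 1),
    ((k : ℂ)⁻¹ * (fourier (-((M : ℤ) + k)) p : ℂ)) • fourier ((M : ℤ) + k)

def Qpert (s : Finset UnitCircle) (w : UnitCircle → ℂ) (n M : ℕ) : C(UnitCircle, ℂ) :=
  ∑ p ∈ s, ((w p) / (Hr n : ℂ)) • (Ablock n M p - Bblock n M p)

lemma fourier_factor (j : ℤ) (p q : UnitCircle) :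
    (fourier (-j) p : ℂ) * fourier j q = fourier j (q - p) := by
  rw [sub_eq_add_neg, fourier_pt_add, fourier_pt_neg]
  ring

lemma fourier_split (a b : ℤ) (u : UnitCircle) :
    (fourier (a + b) u : ℂ) = fourier a u * fourier b u := fourier_add

lemma fourier_negk (k : ℕ) (u : UnitCircle) :
    (fourier (-(k : ℤ)) u : ℂ) = (fourier (-1) u : ℂ) ^ k := by
  rw [show (-(k:ℤ)) = (k : ℤ) * (-1) by ring, fourier_index_pow]

lemma fourier_posk (k : ℕ) (u : UnitCircle) :
    (fourier ((k : ℤ)) u : ℂ) = (fourier 1 u : ℂ) ^ k := by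
  rw [show ((k:ℤ)) = (k : ℤ) * 1 by ring, fourier_index_pow]

lemma Ablock_apply (n M : ℕ) (p q : UnitCircle) :
    Ablock n M p q = (fourier (M : ℤ) (q - p) : ℂ) * Fz n (fourier (-1) (q - p)) := by
  rw [Ablock, ContinuousMap.coe_sum, Finset.sum_apply, Fz, Finset.mul_sum]
  refine Finset.sum_congr rfl fun k hk => ?_
  rw [ContinuousMap.smul_apply, smul_eq_mul]
  have : ((k : ℂ)⁻¹ * (fourier (-((M : ℤ) - k)) p : ℂ)) * fourier ((M : ℤ) - k) q
      = (k : ℂ)⁻¹ * ((fourier (-((M : ℤ) - k)) p : ℂ) * fourier ((M : ℤ) - k) q) := by ring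
  rw [this, fourier_factor]
  rw [show ((M : ℤ) - k) = (M : ℤ) + (-(k:ℤ)) by ring, fourier_split, fourier_negk]
  ring

lemma Bblock_apply (n M : ℕ) (p q : UnitCircle) :
    Bblock n M p q = (fourier (M : ℤ) (q - p) : ℂ) * Fz n (fourier 1 (q - p)) := by
  rw [Bblock, ContinuousMap.coe_sum, Finset.sum_apply, Fz, Finset.mul_sum]
  refine Finset.sum_congr rfl fun k hk => ?_
  rw [ContinuousMap.smul_apply, smul_eq_mul]
  have : ((k : ℂ)⁻¹ * (fourier (-((M : ℤ) + k)) p : ℂ)) * fourier ((M : ℤ) + k) q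
      = (k : ℂ)⁻¹ * ((fourier (-((M : ℤ) + k)) p : ℂ) * fourier ((M : ℤ) + k) q) := by ring
  rw [this, fourier_factor]
  rw [fourier_split, fourier_posk, fourier_posk]
  ring

lemma AB_norm (n M : ℕ) (p q : UnitCircle) :
    ‖(Ablock n M p - Bblock n M p) q‖ ≤ 10 := by
  rw [ContinuousMap.sub_apply, Ablock_apply, Bblock_apply, ← mul_sub, norm_mul,
    fourier_norm_one, one_mul]
  have hconj : (fourier (-1) (q - p) : ℂ) = starRingEnd ℂ (fourier 1 (q - p) : ℂ) := by
    rw [← fourier_neg]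
  rw [hconj, Fz_conj]
  rw [show starRingEnd ℂ (Fz n (fourier 1 (q-p))) - Fz n (fourier 1 (q-p))
      = -(Fz n (fourier 1 (q-p)) - starRingEnd ℂ (Fz n (fourier 1 (q-p)))) by ring, norm_neg]
  rw [sub_conj_norm]
  have := im_Fz_bound n (fourier 1 (q - p)) (fourier_norm_one _ _)
  linarith

lemma partialSum_Ablock (n M : ℕ) (hnM : n ≤ M) (p : UnitCircle) :
    partialSum M ⇑(Ablock n M p) = Ablock n M p := by
  rw [Ablock, partialSum_sum]
  refine Finset.sum_congr rfl fun k hk => ?_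
  obtain ⟨hk1, hk2⟩ := Finset.mem_Ico.mp hk
  rw [partialSum_smul_fourier, if_pos]
  rw [Finset.mem_Icc]
  omega

lemma partialSum_Bblock (n M : ℕ) (p : UnitCircle) :
    partialSum M ⇑(Bblock n M p) = 0 := by
  rw [Bblock, partialSum_sum]
  refine Finset.sum_eq_zero fun k hk => ?_
  obtain ⟨hk1, hk2⟩ := Finset.mem_Ico.mp hk
  rw [partialSum_smul_fourier, if_neg]
  rw [Finset.mem_Icc]
  omega

lemma Qpert_norm (s : Finset UnitCircle) (w : UnitCircle → ℂ) (n M : ℕ) (hn : 1 ≤ n) :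
    ‖Qpert s w n M‖ ≤ (∑ p ∈ s, ‖w p‖) / Hr n * 10 := by
  have hH := Hr_pos n hn
  refine (ContinuousMap.norm_le _ (by positivity)).mpr fun q => ?_
  rw [Qpert, ContinuousMap.coe_sum, Finset.sum_apply]
  calc ‖∑ p ∈ s, ((w p / (Hr n : ℂ)) • (Ablock n M p - Bblock n M p)) q‖
      ≤ ∑ p ∈ s, ‖((w p / (Hr n : ℂ)) • (Ablock n M p - Bblock n M p)) q‖ :=
        norm_sum_le _ _
    _ ≤ ∑ p ∈ s, ‖w p‖ / Hr n * 10 := by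
        refine Finset.sum_le_sum fun p _ => ?_
        rw [ContinuousMap.smul_apply, norm_smul, norm_div]
        rw [Complex.norm_real, Real.norm_eq_abs, _root_.abs_of_pos hH]
        exact mul_le_mul_of_nonneg_left (AB_norm n M p q) (by positivity)
    _ = (∑ p ∈ s, ‖w p‖) / Hr n * 10 := by
        simp_rw [div_mul_eq_mul_div, ← Finset.sum_div, ← Finset.sum_mul]

def Cconst (s : Finset UnitCircle) : ℝ :=
  ∑ p ∈ s, ∑ q ∈ s, (if q = p then 0 else 2 / ‖(fourier (-1) (q - p) : ℂ) - 1‖)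

lemma Cconst_nonneg (s : Finset UnitCircle) : 0 ≤ Cconst s := by
  refine Finset.sum_nonneg fun p _ => Finset.sum_nonneg fun q _ => ?_
  split_ifs with h
  · exact le_rfl
  · positivity

lemma Cconst_le (s : Finset UnitCircle) (p q : UnitCircle) (hp : p ∈ s) (hq : q ∈ s)
    (hne : q ≠ p) : 2 / ‖(fourier (-1) (q - p) : ℂ) - 1‖ ≤ Cconst s := by
  have step1 : 2 / ‖(fourier (-1) (q - p) : ℂ) - 1‖ ≤
      ∑ q' ∈ s, (if q' = p then (0:ℝ) else 2 / ‖(fourier (-1) (q' - p) : ℂ) - 1‖) := by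
    have := Finset.single_le_sum
      (f := fun q' => if q' = p then (0:ℝ) else 2 / ‖(fourier (-1) (q' - p) : ℂ) - 1‖)
      (fun q' _ => by split_ifs <;> positivity) hq
    rwa [if_neg hne] at this
  have step2 : ∑ q' ∈ s, (if q' = p then (0:ℝ) else 2 / ‖(fourier (-1) (q' - p) : ℂ) - 1‖)
      ≤ Cconst s := by
    exact Finset.single_le_sum
      (f := fun p' => ∑ q' ∈ s, (if q' = p' then (0:ℝ) else 2 / ‖(fourier (-1) (q' - p') : ℂ) - 1‖))
      (fun p' _ => Finset.sum_nonneg fun q' _ => by split_ifs <;> positivity) hp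
  exact step1.trans step2

lemma fourier_neg_one_ne_one (u : UnitCircle) (hu : u ≠ 0) :
    (fourier (-1) u : ℂ) ≠ 1 := by
  intro h
  apply hu
  apply fourier_eq_one_iff
  have : (fourier (-1) u : ℂ) = starRingEnd ℂ (fourier 1 u : ℂ) := by rw [← fourier_neg]
  rw [this] at h
  have := congrArg (starRingEnd ℂ) h
  simpa using this

lemma partialSum_Qpert (s : Finset UnitCircle) (w : UnitCircle → ℂ) (n M : ℕ)
    (hn : 1 ≤ n) (hnM : n ≤ M) (q : UnitCircle) (hq : q ∈ s) :
    ‖partialSum M ⇑(Qpert s w n M) q - w q‖ ≤ (∑ p ∈ s, ‖w p‖) * Cconst s / Hr n := by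
  have hH := Hr_pos n hn
  have hps : partialSum M ⇑(Qpert s w n M) =
      ∑ p ∈ s, ((w p) / (Hr n : ℂ)) • Ablock n M p := by
    rw [Qpert, partialSum_sum]
    refine Finset.sum_congr rfl fun p _ => ?_
    rw [partialSum_smul, partialSum_sub, partialSum_Ablock n M hnM, partialSum_Bblock, sub_zero]
  rw [hps]
  -- evaluate at q
  have heval : (∑ p ∈ s, ((w p) / (Hr n : ℂ)) • Ablock n M p) q =
      ∑ p ∈ s, ((w p) / (Hr n : ℂ)) * Ablock n M p q := by
    rw [ContinuousMap.coe_sum, Finset.sum_apply]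
    simp
  rw [heval]
  -- split off the diagonal term
  rw [← Finset.add_sum_erase _ _ hq]
  have hdiag : ((w q) / (Hr n : ℂ)) * Ablock n M q q = w q := by
    rw [Ablock_apply]
    simp only [sub_self]
    rw [fourier_pt_zero, fourier_pt_zero, Fz_one, one_mul]
    have hH0 : ((Hr n : ℝ) : ℂ) ≠ 0 := by
      exact_mod_cast ne_of_gt hH
    rw [div_mul_cancel₀ _ hH0]
  rw [hdiag, add_sub_cancel_left]
  calc ‖∑ p ∈ s.erase q, ((w p) / (Hr n : ℂ)) * Ablock n M p q‖
      ≤ ∑ p ∈ s.erase q, ‖((w p) / (Hr n : ℂ)) * Ablock n M p q‖ := norm_sum_le _ _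
    _ ≤ ∑ p ∈ s.erase q, ‖w p‖ * Cconst s / Hr n := by
        refine Finset.sum_le_sum fun p hp => ?_
        obtain ⟨hpq, hps'⟩ := Finset.mem_erase.mp hp
        rw [norm_mul, norm_div, Complex.norm_real, Real.norm_eq_abs, _root_.abs_of_pos hH]
        rw [Ablock_apply, norm_mul, fourier_norm_one, one_mul]
        have hqp : q - p ≠ 0 := sub_ne_zero.mpr (Ne.symm hpq)
        have hz1 : (fourier (-1) (q - p) : ℂ) ≠ 1 := fourier_neg_one_ne_one _ hqp
        have hFz : ‖Fz n (fourier (-1) (q - p) : ℂ)‖ ≤ 2 / ‖(fourier (-1) (q - p) : ℂ) - 1‖ :=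
          Fz_bound n _ (fourier_norm_one _ _) hz1
        have hle : ‖Fz n (fourier (-1) (q - p) : ℂ)‖ ≤ Cconst s :=
          hFz.trans (Cconst_le s p q hps' hq (Ne.symm hpq))
        calc ‖w p‖ / Hr n * ‖Fz n (fourier (-1) (q - p) : ℂ)‖
            ≤ ‖w p‖ / Hr n * Cconst s := mul_le_mul_of_nonneg_left hle (by positivity)
          _ = ‖w p‖ * Cconst s / Hr n := by ring
    _ ≤ ∑ p ∈ s, ‖w p‖ * Cconst s / Hr n := by
        refine Finset.sum_le_sum_of_subset_of_nonneg (Finset.erase_subset _ _) ?_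
        intro p _ _
        have := Cconst_nonneg s
        positivity
    _ = (∑ p ∈ s, ‖w p‖) * Cconst s / Hr n := by
        simp_rw [← Finset.sum_div, ← Finset.sum_mul]

lemma partialSum_fix (P : C(UnitCircle, ℂ))
    (hP : P ∈ Submodule.span ℂ (Set.range (@fourier (2 * Real.pi)))) :
    ∃ d : ℕ, ∀ M, d ≤ M → partialSum M ⇑P = P := by
  obtain ⟨c, hc⟩ := Finsupp.mem_span_range_iff_exists_finsupp.mp hP
  refine ⟨c.support.sup (fun k => k.natAbs), fun M hM => ?_⟩
  rw [← hc, Finsupp.sum, partialSum_sum]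
  refine Finset.sum_congr rfl fun k hk => ?_
  rw [partialSum_smul_fourier, if_pos]
  rw [Finset.mem_Icc]
  have := Finset.le_sup (f := fun k : ℤ => k.natAbs) hk
  omega

lemma key_density (s : Finset UnitCircle) (w : UnitCircle → ℂ) {ε δ : ℝ}
    (hε : 0 < ε) (hδ : 0 < δ) (N : ℕ) (g : C(UnitCircle, ℂ)) :
    ∃ f : C(UnitCircle, ℂ), dist f g < ε ∧ ∃ M, N ≤ M ∧
      ∀ q ∈ s, ‖partialSum M ⇑f q - w q‖ < δ := by
  have hdense : Dense ((Submodule.span ℂ (Set.range (@fourier (2 * Real.pi)))) :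
      Set C(UnitCircle, ℂ)) :=
    Submodule.dense_iff_topologicalClosure_eq_top.mpr span_fourier_closure_eq_top
  obtain ⟨P, hPmem, hPd⟩ := hdense.exists_dist_lt g (by positivity : 0 < ε / 2)
  obtain ⟨d, hd⟩ := partialSum_fix P hPmem
  set w' : UnitCircle → ℂ := fun p => w p - P p with hw'
  set A : ℝ := ∑ p ∈ s, ‖w' p‖ with hA
  have hA0 : 0 ≤ A := Finset.sum_nonneg fun p _ => norm_nonneg _
  set CC := Cconst s with hCC
  have hCC0 : 0 ≤ CC := Cconst_nonneg s
  obtain ⟨n, hHn, hn1⟩ := ((Hr_tendsto.eventually_ge_atTop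
    ((20 * A + 1) / ε + (A * CC + 1) / δ)).and (eventually_ge_atTop 1)).exists
  have hH := Hr_pos n hn1
  have h20 : 20 * A + 1 ≤ Hr n * ε := by
    have ha : (20 * A + 1) / ε ≤ Hr n := by
      have : (0:ℝ) ≤ (A * CC + 1) / δ := by positivity
      linarith
    exact (div_le_iff₀ hε).mp ha
  have hCCb : A * CC + 1 ≤ Hr n * δ := by
    have ha : (A * CC + 1) / δ ≤ Hr n := by
      have : (0:ℝ) ≤ (20 * A + 1) / ε := by positivity
      linarith
    exact (div_le_iff₀ hδ).mp ha
  set M := N + d + n with hM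
  set Q := Qpert s w' n M with hQ
  have hQn : ‖Q‖ ≤ A / Hr n * 10 := Qpert_norm s w' n M hn1
  have hnorm : A / Hr n * 10 < ε / 2 := by
    rw [div_mul_eq_mul_div, div_lt_iff₀ hH]
    nlinarith
  refine ⟨P + Q, ?_, M, by omega, ?_⟩
  · calc dist (P + Q) g ≤ dist (P + Q) P + dist P g := dist_triangle _ _ _
      _ < ε / 2 + ε / 2 := by
          refine add_lt_add_of_le_of_lt ?_ ?_
          · rw [dist_eq_norm, add_sub_cancel_left]
            exact hQn.trans_lt hnorm |>.le
          · rwa [dist_comm]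
      _ = ε := by ring
  · intro q hq
    have hps : partialSum M ⇑(P + Q) = P + partialSum M ⇑Q := by
      rw [partialSum_add, hd M (by omega)]
    rw [hps]
    have : (P + partialSum M ⇑Q) q - w q = partialSum M ⇑Q q - w' q := by
      simp [hw']; ring
    rw [this]
    have hbound := partialSum_Qpert s w' n M hn1 (by omega) q hq
    rw [← hA, ← hCC] at hbound
    refine lt_of_le_of_lt hbound ?_
    rw [div_lt_iff₀ hH]
    nlinarith

def cval (q : ℚ × ℚ) : ℂ := (q.1 : ℝ) + (q.2 : ℝ) * Complex.I

lemma cval_near (z : ℂ) {ε : ℝ} (hε : 0 < ε) : ∃ q : ℚ × ℚ, ‖cval q - z‖ < ε := by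
  obtain ⟨a, ha⟩ := exists_rat_near z.re (by positivity : (0:ℝ) < ε/2)
  obtain ⟨b, hb⟩ := exists_rat_near z.im (by positivity : (0:ℝ) < ε/2)
  refine ⟨(a, b), ?_⟩
  have h1 : ((cval (a,b)) - z).re = (a:ℝ) - z.re := by simp [cval]
  have h2 : ((cval (a,b)) - z).im = (b:ℝ) - z.im := by simp [cval]
  calc ‖cval (a,b) - z‖ ≤ |((cval (a,b)) - z).re| + |((cval (a,b)) - z).im| :=
        Complex.norm_le_abs_re_add_abs_im _
    _ < ε := by rw [h1, h2]; rw [abs_sub_comm] at ha hb; linarith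

end KK

open KK

/-- For each countable `E ⊆ 𝕋`, quasi all `f ∈ C(𝕋)` have the property that every
`h : E → ℂ` is a pointwise limit on `E` of a subsequence of the Fourier partial sums of `f`. -/
theorem stmt0 (E : Set UnitCircle) (hE : E.Countable) :
    {f : C(UnitCircle, ℂ) |
      ∀ h : E → ℂ, ∃ φ : ℕ → ℕ, StrictMono φ ∧
        ∀ t : E, Tendsto (fun j => partialSum (φ j) ⇑f t) atTop (𝓝 (h t))} ∈
      residual C(UnitCircle, ℂ) := by
  classical
  rcases E.eq_empty_or_nonempty with rfl | hne
  · refine Filter.mem_of_superset Filter.univ_mem ?_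
    rintro f - h
    refine ⟨id, strictMono_id, ?_⟩
    rintro ⟨t, ht⟩
    exact absurd ht (Set.notMem_empty t)
  · obtain ⟨x, hx⟩ := hE.exists_surjective hne
    let U : ((m : ℕ) × ((Fin (m+1) → ℚ × ℚ) × ℕ × ℕ)) → Set C(UnitCircle, ℂ) := fun idx =>
      if (∀ i j : Fin (idx.1+1), ((x i : ↥E) : UnitCircle) = ((x j : ↥E) : UnitCircle) →
          idx.2.1 i = idx.2.1 j)
      then {f | ∃ M, idx.2.2.2 ≤ M ∧ ∀ i : Fin (idx.1+1),
        ‖partialSum M ⇑f ((x i : ↥E) : UnitCircle) - cval (idx.2.1 i)‖ < 1/((idx.2.2.1 : ℝ)+1)}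
      else univ
    have hUopen : ∀ idx, IsOpen (U idx) := by
      rintro ⟨m, v, k, N⟩
      simp only [U]
      split_ifs
      · have : {f : C(UnitCircle,ℂ) | ∃ M, N ≤ M ∧ ∀ i : Fin (m+1),
            ‖partialSum M ⇑f ((x i : ↥E) : UnitCircle) - cval (v i)‖ < 1/((k:ℝ)+1)} =
            ⋃ M, ⋃ (_ : N ≤ M), ⋂ i : Fin (m+1),
              (fun f : C(UnitCircle,ℂ) => partialSum M ⇑f ((x i : ↥E) : UnitCircle)) ⁻¹'
                Metric.ball (cval (v i)) (1/((k:ℝ)+1)) := by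
          ext f
          simp [Metric.mem_ball, dist_eq_norm]
        rw [this]
        exact isOpen_iUnion fun M => isOpen_iUnion fun _ =>
          isOpen_iInter_of_finite fun i =>
            (Metric.isOpen_ball).preimage (partialSum_eval_continuous _ _)
      · exact isOpen_univ
    have hUdense : ∀ idx, Dense (U idx) := by
      rintro ⟨m, v, k, N⟩
      simp only [U]
      split_ifs with hcons
      · rw [Metric.dense_iff]
        intro g r hr
        set s := Finset.image (fun i : Fin (m+1) => ((x i : ↥E) : UnitCircle)) Finset.univ with hs
        set wfun : UnitCircle → ℂ := fun p =>
          if hp : ∃ i : Fin (m+1), ((x i : ↥E) : UnitCircle) = p then cval (v hp.choose)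
          else 0 with hwfun
        obtain ⟨f, hfd, M, hMN, hfv⟩ :=
          key_density s wfun hr (by positivity : (0:ℝ) < 1/((k:ℝ)+1)) N g
        refine ⟨f, Metric.mem_ball.mpr hfd, M, hMN, fun i => ?_⟩
        have hqs : ((x i : ↥E) : UnitCircle) ∈ s := by
          rw [hs]
          exact Finset.mem_image.mpr ⟨i, Finset.mem_univ _, rfl⟩
        have := hfv _ hqs
        have hwq : wfun ((x i : ↥E) : UnitCircle) = cval (v i) := by
          rw [hwfun]
          dsimp only
          have hex : ∃ i' : Fin (m+1), ((x i' : ↥E) : UnitCircle) = ((x i : ↥E) : UnitCircle) :=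
            ⟨i, rfl⟩
          rw [dif_pos hex]
          exact congrArg cval (hcons hex.choose i hex.choose_spec)
        rwa [hwq] at this
      · exact dense_univ
    have hG : (⋂ idx, U idx) ∈ residual C(UnitCircle, ℂ) :=
      countable_iInter_mem.mpr fun idx => residual_of_dense_open (hUopen idx) (hUdense idx)
    refine Filter.mem_of_superset hG ?_
    intro f hf h
    have happrox : ∀ (j : ℕ) (e : ↥E), ∃ q : ℚ×ℚ, ‖cval q - h e‖ < 1/((j:ℝ)+1) :=
      fun j e => cval_near _ (by positivity)
    choose ρ hρ using happrox
    have hstep : ∀ (j N₀ : ℕ), ∃ M, N₀ ≤ M ∧ ∀ i : Fin (j+1),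
        ‖partialSum M ⇑f ((x i : ↥E) : UnitCircle) - cval (ρ j (x i))‖ < 1/((j:ℝ)+1) := by
      intro j N₀
      have hmem := Set.mem_iInter.mp hf ⟨j, (fun i : Fin (j+1) => ρ j (x i)), j, N₀⟩
      simp only [U] at hmem
      rw [if_pos] at hmem
      · exact hmem
      · intro i i' hii'
        have : x (i : ℕ) = x (i' : ℕ) := Subtype.ext hii'
        rw [this]
    let φfun : ℕ → ℕ := fun j =>
      Nat.rec (hstep 0 0).choose (fun j ih => (hstep (j+1) (ih+1)).choose) j
    have hφsucc : ∀ j, φfun (j+1) = (hstep (j+1) (φfun j + 1)).choose := fun j => rfl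
    have hφmono : StrictMono φfun := strictMono_nat_of_lt_succ (fun j => by
      rw [hφsucc]
      have := (hstep (j+1) (φfun j + 1)).choose_spec.1
      omega)
    have hφprop : ∀ j (i : Fin (j+1)),
        ‖partialSum (φfun j) ⇑f ((x i : ↥E) : UnitCircle) - cval (ρ j (x i))‖ < 1/((j:ℝ)+1) := by
      intro j
      cases j with
      | zero => exact (hstep 0 0).choose_spec.2
      | succ j => exact (hstep (j+1) (φfun j + 1)).choose_spec.2
    refine ⟨φfun, hφmono, ?_⟩
    intro t
    obtain ⟨i₀, hi₀⟩ := hx t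
    rw [Metric.tendsto_atTop]
    intro ε hε
    obtain ⟨J₁, hJ₁⟩ := exists_nat_gt (2/ε)
    refine ⟨max i₀ J₁, fun j hj => ?_⟩
    have hij : i₀ < j + 1 := by have := le_of_max_le_left hj; omega
    have h1 := hφprop j ⟨i₀, hij⟩
    have hxi : x ((⟨i₀, hij⟩ : Fin (j+1)) : ℕ) = t := hi₀
    rw [hxi] at h1
    have h2 := hρ j t
    rw [dist_eq_norm]
    have htri : ‖partialSum (φfun j) ⇑f (t : UnitCircle) - h t‖ ≤
        ‖partialSum (φfun j) ⇑f (t : UnitCircle) - cval (ρ j t)‖ + ‖cval (ρ j t) - h t‖ := by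
      have := norm_sub_le_norm_sub_add_norm_sub
        (partialSum (φfun j) ⇑f (t : UnitCircle)) (cval (ρ j t)) (h t)
      exact this
    have hJ : (2:ℝ) / ε < (j:ℝ) + 1 := by
      have hjJ : (J₁:ℝ) ≤ (j:ℝ) := by
        exact_mod_cast le_of_max_le_right hj
      linarith
    have hfrac : 1/((j:ℝ)+1) + 1/((j:ℝ)+1) < ε := by
      have hjpos : (0:ℝ) < (j:ℝ) + 1 := by positivity
      rw [← add_div]
      rw [div_lt_iff₀ hjpos]
      have := (div_lt_iff₀ hε).mp hJ
      linarith
    calc ‖partialSum (φfun j) ⇑f (t : UnitCircle) - h t‖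
        ≤ ‖partialSum (φfun j) ⇑f (t : UnitCircle) - cval (ρ j t)‖ + ‖cval (ρ j t) - h t‖ := htri
      _ < 1/((j:ℝ)+1) + 1/((j:ℝ)+1) := by
          refine add_lt_add ?_ h2
          rw [show ‖partialSum (φfun j) ⇑f (t : UnitCircle) - cval (ρ j t)‖ =
            ‖partialSum (φfun j) ⇑f (t : UnitCircle) - cval (ρ j t)‖ from rfl]
          convert h1 using 2
      _ < ε := hfrac
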